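/- arXiv:1702.06684 — 6 statements merged into one kernel-verified Lean document; each statement's English description precedes it below -/
import Mathlib

section
/- For a word w = x₁x₂⋯x_l over the alphabet {1,2}, the number f_w of saturated chains from the empty word to w in the Young-Fibonacci lattice equals the product over all indices i with x_i = 2 of (x_i + x_{i+1} + ⋯ + x_l − 1). -/
/-- The list of words covered by `w` in the Young-Fibonacci lattice. -/
def preds : List ℕ → List (List ℕ)
  | [] => []
  | 1 :: t => [t]
  | 2 :: t => (1 :: t) :: (preds t).map (fun u => 2 :: u)
  | _ :: _ => []

theorem preds_sum_lt : ∀ (w u : List ℕ), u ∈ preds w → u.sum < w.sum := by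
  intro w
  induction w using preds.induct with
  | case1 => intro u h; simp [preds] at h
  | case2 t => intro u h; simp [preds] at h; subst h; simp
  | case3 t ih =>
      intro u h
      simp [preds] at h
      rcases h with h | ⟨v, hv, rfl⟩
      · subst h; simp
      · have := ih v hv; simpa using by omega
  | case4 x t h1 h2 => intro u h; simp [preds] at h

/-- The number of saturated chains from the empty word to `w`. -/
def f (w : List ℕ) : ℕ :=
  if w = [] then 1
  else ((preds w).attach.map (fun u => f u.1)).sum
termination_by w.sum
decreasing_by exact preds_sum_lt w u.1 u.2

/-- The product formula. -/
def fprod (w : List ℕ) : ℕ :=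
  ∏ i ∈ Finset.univ.filter (fun i : Fin w.length => w.get i = 2), ((w.drop i.1).sum - 1)

-- auxiliary recursive product
def g : List ℕ → ℕ
  | [] => 1
  | a :: t => (if a = 2 then t.sum + 1 else 1) * g t

theorem preds_sum_eq : ∀ (w u : List ℕ), u ∈ preds w → u.sum + 1 = w.sum := by
  intro w
  induction w using preds.induct with
  | case1 => intro u h; simp [preds] at h
  | case2 t => intro u h; simp [preds] at h; subst h; simp; omega
  | case3 t ih =>
      intro u h
      simp [preds] at h
      rcases h with h | ⟨v, hv, rfl⟩
      · subst h; simp; omega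
      · have := ih v hv; simp; omega
  | case4 x t h1 h2 => intro u h; simp [preds] at h

theorem preds_valid : ∀ (w u : List ℕ), u ∈ preds w →
    (∀ x ∈ w, x = 1 ∨ x = 2) → ∀ x ∈ u, x = 1 ∨ x = 2 := by
  intro w
  induction w using preds.induct with
  | case1 => intro u h; simp [preds] at h
  | case2 t =>
      intro u h hw
      simp [preds] at h
      subst h
      exact fun x hx => hw x (List.mem_cons_of_mem _ hx)
  | case3 t ih =>
      intro u h hw
      simp [preds] at h
      have ht : ∀ x ∈ t, x = 1 ∨ x = 2 := fun x hx => hw x (List.mem_cons_of_mem _ hx)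
      rcases h with h | ⟨v, hv, rfl⟩
      · subst h
        intro x hx
        rcases List.mem_cons.mp hx with rfl | hx
        · left; rfl
        · exact ht x hx
      · intro x hx
        rcases List.mem_cons.mp hx with rfl | hx
        · right; rfl
        · exact ih v hv ht x hx
  | case4 x t h1 h2 => intro u h; simp [preds] at h

theorem f_ne_nil (w : List ℕ) (h : w ≠ []) : f w = ((preds w).map f).sum := by
  rw [f]
  simp [h, List.attach_map_val]

theorem fprod_eq_g (w : List ℕ) :
    (∏ i ∈ Finset.univ.filter (fun i : Fin w.length => w.get i = 2),
      ((w.drop i.1).sum - 1)) = g w := by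
  induction w with
  | nil => simp [g]
  | cons a t ih =>
      rw [Finset.prod_filter]
      simp only [List.length_cons]
      rw [Fin.prod_univ_succ]
      rw [Finset.prod_filter] at ih
      simp only [Fin.val_succ, List.get_cons_succ, List.get_cons_succ', List.drop_succ_cons, List.get]
      rw [ih, g]
      by_cases ha : a = 2
      · simp [ha, List.get, Nat.add_comm]
      · simp [ha, List.get]

theorem f_eq_g_aux : ∀ n, ∀ w : List ℕ, w.sum ≤ n → (∀ x ∈ w, x = 1 ∨ x = 2) → f w = g w := by
  intro n
  induction n with
  | zero =>
      intro w hs hw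
      cases w with
      | nil => simp [f, g]
      | cons a t =>
          rcases hw a (by simp) with rfl | rfl <;> simp at hs
  | succ n ih =>
      intro w hs hw
      cases w with
      | nil => simp [f, g]
      | cons a t =>
          have ht : ∀ x ∈ t, x = 1 ∨ x = 2 := fun x hx => hw x (List.mem_cons_of_mem _ hx)
          rcases hw a (by simp) with rfl | rfl
          · -- a = 1
            rw [f_ne_nil _ (by simp)]
            simp only [preds, List.map_cons, List.map_nil, List.sum_cons, List.sum_nil]
            rw [g]
            have : t.sum ≤ n := by simp at hs; omega
            simpa using ih t this ht
          · -- a = 2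
            rw [f_ne_nil _ (by simp)]
            simp only [preds, List.map_cons, List.sum_cons, List.map_map]
            have h1 : f (1 :: t) = g t := by
              have : (1 :: t).sum ≤ n := by simp at hs ⊢; omega
              have := ih (1 :: t) this (by
                intro x hx
                rcases List.mem_cons.mp hx with rfl | hx
                · left; rfl
                · exact ht x hx)
              rw [this, g]; simp
            rw [h1]
            have h2 : ((preds t).map (f ∘ fun u => 2 :: u)).sum = t.sum * g t := by
              have hmap : ∀ u ∈ preds t, (f ∘ fun u => 2 :: u) u = t.sum * g u := by
                intro u hu
                have hus : u.sum + 1 = t.sum := preds_sum_eq t u hu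
                have huv : ∀ x ∈ u, x = 1 ∨ x = 2 := preds_valid t u hu ht
                have h2u : (2 :: u).sum ≤ n := by simp at hs ⊢; omega
                have := ih (2 :: u) h2u (by
                  intro x hx
                  rcases List.mem_cons.mp hx with rfl | hx
                  · right; rfl
                  · exact huv x hx)
                simp only [Function.comp_apply, this, g]
                simp [hus]
              rw [List.map_congr_left hmap]
              rcases eq_or_ne t [] with rfl | htne
              · simp [preds]
              · have hsum : ((preds t).map (fun u => t.sum * g u)).sum
                    = t.sum * ((preds t).map g).sum := by
                  rw [← List.sum_map_mul_left]
                rw [hsum]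
                have hgf : ((preds t).map g).sum = ((preds t).map f).sum := by
                  apply congrArg
                  apply List.map_congr_left
                  intro u hu
                  have hus : u.sum + 1 = t.sum := preds_sum_eq t u hu
                  exact (ih u (by simp at hs; omega) (preds_valid t u hu ht)).symm
                rw [hgf, ← f_ne_nil t htne, ih t (by simp at hs; omega) ht]
            rw [h2, g]
            by_cases h0 : (2:ℕ) = 2
            · simp; ring
            · simp at h0

/-- the chain-counting statistic equals the hook-product formula. -/
theorem f_eq_fprod (w : List ℕ) (hw : ∀ x ∈ w, x = 1 ∨ x = 2) :
    f w = ∏ i ∈ Finset.univ.filter (fun i : Fin w.length => w.get i = 2),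
      ((w.drop i.1).sum - 1) := by
  rw [fprod_eq_g]
  exact f_eq_g_aux w.sum w le_rfl hw
end

section
/- A word w over {1,2} has f_w odd if and only if w is of the form a₀a₁⋯a_{k−1} or 1a₀a₁⋯a_{k−1}, where each block a_i is either the letter 2 or the pair 11. Equivalently, f_w is odd if and only if the number of 1's to the right of each 2 in w is even. -/
def P' (w : List ℕ) : Prop := ∀ a b : List ℕ, w = a ++ 2 :: b → Even (b.count 1)

lemma P'_nil : P' [] := by intro a b h; simp at h

lemma P'_cons (x : ℕ) (t : List ℕ) :
    P' (x :: t) ↔ (x = 2 → Even (t.count 1)) ∧ P' t := by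
  constructor
  · intro h
    exact ⟨fun hx => h [] t (by rw [hx]; rfl),
      fun a b hb => h (x :: a) b (by rw [hb]; rfl)⟩
  · rintro ⟨h2, hP⟩ a b hab
    cases a with
    | nil =>
        simp only [List.nil_append, List.cons.injEq] at hab
        obtain ⟨hx, ht⟩ := hab; subst ht; exact h2 hx
    | cons y a' =>
        simp only [List.cons_append, List.cons.injEq] at hab
        exact hP a' b hab.2

lemma sum_mod2 (w : List ℕ) (hw : ∀ x ∈ w, x = 1 ∨ x = 2) :
    w.sum % 2 = (w.count 1) % 2 := by
  induction w with
  | nil => rfl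
  | cons x t ih =>
    have hx := hw x (by simp)
    have ih' := ih (fun y hy => hw y (by simp [hy]))
    rcases hx with rfl | rfl
    · simp [List.count_cons] at *; omega
    · simp [List.count_cons] at *; omega

lemma flat_P (blocks : List (List ℕ)) (hb : ∀ b ∈ blocks, b = [2] ∨ b = [1, 1]) :
    P' blocks.flatten ∧ Even (blocks.flatten.count 1) := by
  induction blocks with
  | nil => exact ⟨P'_nil, by simp⟩
  | cons b rest ih =>
    obtain ⟨hP, hE⟩ := ih (fun c hc => hb c (by simp [hc]))
    rw [Nat.even_iff] at hE ⊢
    rcases hb b (by simp) with rfl | rfl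
    · refine ⟨?_, ?_⟩
      · rw [show ([2] :: rest).flatten = 2 :: rest.flatten by simp, P'_cons]
        exact ⟨fun _ => Nat.even_iff.mpr hE, hP⟩
      · simp [List.count_cons]; omega
    · refine ⟨?_, ?_⟩
      · rw [show ([1,1] :: rest).flatten = 1 :: 1 :: rest.flatten by simp,
          P'_cons, P'_cons]
        exact ⟨by omega, by omega, hP⟩
      · simp [List.count_cons]; omega

lemma P_to_flat (w : List ℕ) (hw : ∀ x ∈ w, x = 1 ∨ x = 2) : P' w →
    (Even (w.count 1) → ∃ blocks : List (List ℕ),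
        (∀ b ∈ blocks, b = [2] ∨ b = [1, 1]) ∧ w = blocks.flatten) ∧
    (¬ Even (w.count 1) → ∃ blocks : List (List ℕ),
        (∀ b ∈ blocks, b = [2] ∨ b = [1, 1]) ∧ w = 1 :: blocks.flatten) := by
  induction w with
  | nil => exact fun _ => ⟨fun _ => ⟨[], by simp⟩, fun h => absurd (by simp) h⟩
  | cons x t ih =>
    intro hP
    rw [P'_cons] at hP
    obtain ⟨h2, hPt⟩ := hP
    obtain ⟨ihE, ihO⟩ := ih (fun y hy => hw y (by simp [hy])) hPt
    rcases hw x (by simp) with rfl | rfl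
    · -- x = 1
      have hc : ((1 : ℕ) :: t).count 1 = t.count 1 + 1 := by simp [List.count_cons]
      constructor
      · intro hE
        have : ¬ Even (t.count 1) := by rw [Nat.even_iff] at hE ⊢; omega
        obtain ⟨bl, hbl, ht⟩ := ihO this
        refine ⟨[1, 1] :: bl, ?_, by simp [ht]⟩
        intro b hb
        rcases List.mem_cons.mp hb with rfl | hb
        exacts [Or.inr rfl, hbl b hb]
      · intro hO
        have : Even (t.count 1) := by rw [Nat.even_iff] at hO ⊢; omega
        obtain ⟨bl, hbl, ht⟩ := ihE this
        exact ⟨bl, hbl, by simp [ht]⟩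
    · -- x = 2
      have hEt := h2 rfl
      have hc : ((2 : ℕ) :: t).count 1 = t.count 1 := by simp [List.count_cons]
      obtain ⟨bl, hbl, ht⟩ := ihE hEt
      constructor
      · intro _
        refine ⟨[2] :: bl, ?_, by simp [ht]⟩
        intro b hb
        rcases List.mem_cons.mp hb with rfl | hb
        exacts [Or.inl rfl, hbl b hb]
      · intro h; rw [hc] at h; exact absurd hEt h

lemma fin_iff_P' (w : List ℕ) :
    (∀ i : Fin w.length, w.get i = 2 → Even ((w.drop (i.1 + 1)).count 1)) ↔ P' w := by
  constructor
  · intro h a b hab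
    have hlen : a.length < w.length := by subst hab; simp
    have h1 : w.get ⟨a.length, hlen⟩ = 2 := by
      subst hab
      simp [List.get_eq_getElem, List.getElem_append_right (Nat.le_refl a.length)]
    have h2 : w.drop (a.length + 1) = b := by
      subst hab
      rw [show a.length + 1 = a.length + 1 from rfl]
      rw [List.drop_append]
      simp
    have := h ⟨a.length, hlen⟩ h1
    rwa [h2] at this
  · intro h i hi
    have hd : w = w.take i.1 ++ 2 :: w.drop (i.1 + 1) := by
      conv_lhs => rw [← List.take_append_drop i.1 w]
      congr 1
      rw [List.drop_eq_getElem_cons i.isLt]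
      simp [List.get_eq_getElem] at hi
      rw [hi]
    exact h _ _ hd

lemma even_sum_iff (w : List ℕ) (hw : ∀ x ∈ w, x = 1 ∨ x = 2) :
    Even w.sum ↔ Even (w.count 1) := by
  rw [Nat.even_iff, Nat.even_iff, sum_mod2 w hw]


lemma factor_odd (w : List ℕ) (hw : ∀ x ∈ w, x = 1 ∨ x = 2) (i : Fin w.length)
    (hi : w.get i = 2) :
    Odd ((w.drop i.1).sum - 1) ↔ Even ((w.drop (i.1 + 1)).count 1) := by
  have hd : w.drop i.1 = 2 :: w.drop (i.1 + 1) := by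
    rw [List.drop_eq_getElem_cons i.isLt]
    simp only [List.get_eq_getElem] at hi
    rw [hi]
  have hsub : ∀ x ∈ w.drop (i.1 + 1), x = 1 ∨ x = 2 :=
    fun x hx => hw x (List.mem_of_mem_drop hx)
  rw [hd, List.sum_cons,
    show 2 + (w.drop (i.1 + 1)).sum - 1 = (w.drop (i.1 + 1)).sum + 1 by omega,
    Nat.odd_add_one, Nat.not_odd_iff_even]
  exact even_sum_iff _ hsub

lemma fprod_odd_iff (w : List ℕ) (hw : ∀ x ∈ w, x = 1 ∨ x = 2) :
    Odd (fprod w) ↔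
      ∀ i : Fin w.length, w.get i = 2 → Even ((w.drop (i.1 + 1)).count 1) := by
  rw [fprod, ← Nat.not_even_iff_odd, even_iff_two_dvd,
    Nat.prime_two.prime.dvd_finset_prod_iff]
  push_neg
  constructor
  · intro h i hi
    have := h i (by simp only [Finset.mem_filter, Finset.mem_univ, true_and]; exact hi)
    rw [← even_iff_two_dvd, Nat.not_even_iff_odd] at this
    exact (factor_odd w hw i hi).mp this
  · intro h i hi
    simp only [Finset.mem_filter, Finset.mem_univ, true_and] at hi
    rw [← even_iff_two_dvd, Nat.not_even_iff_odd]
    exact (factor_odd w hw i hi).mpr (h i hi)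

/-- `f w` is odd iff `w` is a (possibly `1`-prefixed) concatenation of
blocks `2` and `11`, iff the number of `1`s to the right of each `2` is even. -/
theorem odd_word_characterization (w : List ℕ) (hw : ∀ x ∈ w, x = 1 ∨ x = 2) :
    (Odd (fprod w) ↔
      ∃ blocks : List (List ℕ), (∀ b ∈ blocks, b = [2] ∨ b = [1, 1]) ∧
        (w = blocks.flatten ∨ w = 1 :: blocks.flatten)) ∧
    (Odd (fprod w) ↔
      ∀ i : Fin w.length, w.get i = 2 → Even ((w.drop (i.1 + 1)).count 1)) := by
  have key := fprod_odd_iff w hw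
  refine ⟨key.trans ?_, key⟩
  rw [fin_iff_P' w]
  constructor
  · intro hP
    obtain ⟨hE, hO⟩ := P_to_flat w hw hP
    by_cases h : Even (w.count 1)
    · obtain ⟨bl, hbl, hf⟩ := hE h; exact ⟨bl, hbl, Or.inl hf⟩
    · obtain ⟨bl, hbl, hf⟩ := hO h; exact ⟨bl, hbl, Or.inr hf⟩
  · rintro ⟨bl, hbl, rfl | rfl⟩
    · exact (flat_P bl hbl).1
    · rw [P'_cons]; exact ⟨by omega, (flat_P bl hbl).1⟩
end

section
/- The number of words w over {1,2} with letter-sum n such that f_w is odd equals 2^⌊n/2⌋. -/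
lemma fprod_cons (x : ℕ) (t : List ℕ) :
    fprod (x :: t) = (if x = 2 then x + t.sum - 1 else 1) * fprod t := by
  unfold fprod
  rw [Finset.prod_filter, Finset.prod_filter]
  have : (∏ a : Fin (x :: t).length, if (x :: t).get a = 2 then (List.drop (↑a) (x :: t)).sum - 1 else 1)
      = ∏ a : Fin (t.length + 1), if (x :: t).get a = 2 then (List.drop (↑a) (x :: t)).sum - 1 else 1 := rfl
  rw [this, Fin.prod_univ_succ]
  simp

lemma fprod_nil : fprod [] = 1 := rfl

/-- the number of words over `{1,2}` of rank `n` with odd `f` is `2^⌊n/2⌋`. -/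
theorem card_odd_words (n : ℕ) (L : Finset (List ℕ))
    (hL : ∀ w : List ℕ, w ∈ L ↔ (∀ x ∈ w, x = 1 ∨ x = 2) ∧ w.sum = n ∧ Odd (fprod w)) :
    L.card = 2 ^ (n / 2) := by
  induction n using Nat.strong_induction_on generalizing L with
  | _ n ih =>
  match n with
  | 0 =>
    have : L = {[]} := by
      ext w
      simp only [hL, Finset.mem_singleton]
      constructor
      · rintro ⟨h1, h2, h3⟩
        cases w with
        | nil => rfl
        | cons x t =>
          rcases h1 x (by simp) with rfl | rfl <;> simp at h2
      · rintro rfl; exact ⟨by simp, by simp, by simp [fprod_nil]⟩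
    simp [this]
  | (m+1) =>
    classical
    have hsplit : ∀ w ∈ L, (w.head? = some 1 ∧ ¬ w.head? = some 2) ∨ (w.head? = some 2 ∧ ¬ w.head? = some 1) := by
      intro w hw
      rcases (hL w).1 hw with ⟨h1, h2, _⟩
      cases w with
      | nil => simp at h2
      | cons x t => rcases h1 x (by simp) with rfl | rfl <;> simp
    have hfc : (L.filter fun a => ¬ a.head? = some 1) = L.filter (fun w => w.head? = some 2) := by
      apply Finset.filter_congr
      intro w hw
      rcases hsplit w hw with ⟨h1, h2⟩ | ⟨h1, h2⟩ <;> simp [h1, h2]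
    have hcard : L.card = (L.filter (fun w => w.head? = some 1)).card
        + (L.filter (fun w => w.head? = some 2)).card := by
      rw [← hfc, Finset.card_filter_add_card_filter_not]
    have key : ∀ (a : ℕ),
        ((L.filter (fun w => w.head? = some a)).image List.tail).card
          = (L.filter (fun w => w.head? = some a)).card := by
      intro a
      apply Finset.card_image_of_injOn
      intro u hu v hv huv
      simp only [Finset.coe_filter, Set.mem_setOf_eq] at hu hv
      cases u with
      | nil => simp at hu
      | cons x t =>
        cases v with
        | nil => simp at hv
        | cons y s => simp_all
    have mem1 : ∀ t : List ℕ, t ∈ (L.filter (fun w => w.head? = some 1)).image List.tail ↔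
        (∀ x ∈ t, x = 1 ∨ x = 2) ∧ t.sum = m ∧ Odd (fprod t) := by
      intro t
      simp only [Finset.mem_image, Finset.mem_filter]
      constructor
      · rintro ⟨w, ⟨hw, hh⟩, rfl⟩
        cases w with
        | nil => simp at hh
        | cons x s =>
          simp only [List.head?_cons, Option.some.injEq] at hh; subst hh
          simp only [List.tail_cons]
          rcases (hL _).1 hw with ⟨h1, h2, h3⟩
          rw [fprod_cons] at h3
          simp at h2 h3
          exact ⟨fun x hx => h1 x (by simp [hx]), by omega, h3⟩
      · rintro ⟨h1, h2, h3⟩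
        refine ⟨1 :: t, ⟨(hL _).2 ⟨?_, ?_, ?_⟩, rfl⟩, rfl⟩
        · intro x hx; rcases List.mem_cons.1 hx with rfl | hx
          · left; rfl
          · exact h1 x hx
        · simp; omega
        · rw [fprod_cons]; simpa using h3
    have c1 : (L.filter (fun w => w.head? = some 1)).card = 2 ^ (m / 2) := by
      rw [← key 1]
      exact ih m (by omega) _ mem1
    by_cases hm : Odd m
    · obtain ⟨k, rfl⟩ := hm
      have mem2 : ∀ t : List ℕ, t ∈ (L.filter (fun w => w.head? = some 2)).image List.tail ↔
          (∀ x ∈ t, x = 1 ∨ x = 2) ∧ t.sum = 2 * k ∧ Odd (fprod t) := by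
        intro t
        simp only [Finset.mem_image, Finset.mem_filter]
        constructor
        · rintro ⟨w, ⟨hw, hh⟩, rfl⟩
          cases w with
          | nil => simp at hh
          | cons x s =>
            simp only [List.head?_cons, Option.some.injEq] at hh; subst hh
            simp only [List.tail_cons]
            rcases (hL _).1 hw with ⟨h1, h2, h3⟩
            rw [fprod_cons] at h3
            simp at h2 h3
            rw [Nat.odd_mul] at h3
            exact ⟨fun x hx => h1 x (by simp [hx]), by omega, h3.2⟩
        · rintro ⟨h1, h2, h3⟩
          refine ⟨2 :: t, ⟨(hL _).2 ⟨?_, ?_, ?_⟩, rfl⟩, rfl⟩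
          · intro x hx; rcases List.mem_cons.1 hx with rfl | hx
            · right; rfl
            · exact h1 x hx
          · simp; omega
          · rw [fprod_cons, if_pos rfl, Nat.odd_mul]
            exact ⟨by rw [Nat.odd_iff]; omega, h3⟩
      have c2 : (L.filter (fun w => w.head? = some 2)).card = 2 ^ (2 * k / 2) := by
        rw [← key 2]
        exact ih (2 * k) (by omega) _ mem2
      rw [hcard, c1, c2]
      have e1 : (2 * k + 1) / 2 = k := by omega
      have e2 : 2 * k / 2 = k := by omega
      have e3 : (2 * k + 1 + 1) / 2 = k + 1 := by omega
      rw [e1, e2, e3, pow_succ]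
      ring
    · have hempty : L.filter (fun w => w.head? = some 2) = ∅ := by
        rw [Finset.filter_eq_empty_iff]
        intro w hw hh
        cases w with
        | nil => simp at hh
        | cons x t =>
          simp only [List.head?_cons, Option.some.injEq] at hh; subst hh
          rcases (hL _).1 hw with ⟨h1, h2, h3⟩
          rw [fprod_cons, if_pos rfl, Nat.odd_mul, Nat.odd_iff] at h3
          rw [Nat.not_odd_iff_even, Nat.even_iff] at hm
          simp at h2
          omega
      rw [hcard, c1, hempty]
      rw [Nat.not_odd_iff_even, Nat.even_iff] at hm
      have e : (m + 1) / 2 = m / 2 := by omega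
      simp [e]
end

section
/- Let k ≥ 1 and suppose that for some n, the residues modulo 2^k of the multiset {f_w : w a word over {1,2} of rank n with f_w odd} are equidistributed among the odd residue classes mod 2^k. Then the same holds for rank n+1. -/
lemma fprod_one_cons (t : List ℕ) : fprod (1 :: t) = fprod t := by simp [fprod_cons]

lemma fprod_two_cons (t : List ℕ) : fprod (2 :: t) = (t.sum + 1) * fprod t := by
  rw [fprod_cons]; congr 1; simp; omega

lemma mul_mod_bij (k n i : ℕ) (hk : 1 ≤ k) (hn : Odd n) (hi : Odd i) (hilt : i < 2 ^ k) :
    ∃ j, Odd j ∧ j < 2 ^ k ∧ ∀ x, (n * x) % 2 ^ k = i ↔ x % 2 ^ k = j := by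
  haveI : NeZero (2 ^ k) := ⟨pow_ne_zero _ two_ne_zero⟩
  set N := 2 ^ k with hN
  have hcop : Nat.Coprime n N := Nat.Coprime.pow_right _ (hn.coprime_two_right)
  have hcopi : Nat.Coprime i N := Nat.Coprime.pow_right _ (hi.coprime_two_right)
  have hU : IsUnit (n : ZMod N) := (ZMod.isUnit_iff_coprime n N).mpr hcop
  have hUi : IsUnit (i : ZMod N) := (ZMod.isUnit_iff_coprime i N).mpr hcopi
  have hUinv : IsUnit ((n : ZMod N)⁻¹) :=
    IsUnit.of_mul_eq_one _ (ZMod.inv_mul_of_unit _ hU)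
  set a : ZMod N := (n : ZMod N)⁻¹ * i with ha
  have hUa : IsUnit a := hUinv.mul hUi
  refine ⟨a.val, ?_, ZMod.val_lt a, ?_⟩
  · have hcopj : Nat.Coprime a.val N := by
      have := ZMod.val_coe_unit_coprime hUa.unit
      rwa [hUa.unit_spec] at this
    have h2 : (2 : ℕ) ∣ N := dvd_pow_self 2 (by omega)
    have := Nat.Coprime.coprime_dvd_right h2 hcopj
    exact Nat.coprime_two_right.mp this
  · intro x
    have hcast : ((a.val : ℕ) : ZMod N) = a := by
      rw [ZMod.natCast_val, ZMod.cast_id]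
    constructor
    · intro hx
      have : ((n * x : ℕ) : ZMod N) = (i : ZMod N) := by
        rw [ZMod.natCast_eq_natCast_iff', hx, Nat.mod_eq_of_lt hilt]
      have hz : (x : ZMod N) = a := by
        push_cast at this
        rw [ha, ← this, ← mul_assoc, ZMod.inv_mul_of_unit _ hU, one_mul]
      rw [← Nat.mod_eq_of_lt (ZMod.val_lt a)]
      rw [← ZMod.natCast_eq_natCast_iff', hz, hcast]
    · intro hx
      have hz : (x : ZMod N) = a := by
        rw [← hcast, ZMod.natCast_eq_natCast_iff', hx, Nat.mod_eq_of_lt (ZMod.val_lt a)]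
      have : ((n * x : ℕ) : ZMod N) = (i : ZMod N) := by
        push_cast
        rw [hz, ha, ← mul_assoc, ZMod.mul_inv_of_unit _ hU, one_mul]
      rw [ZMod.natCast_eq_natCast_iff'] at this
      rwa [Nat.mod_eq_of_lt hilt] at this

lemma card_filter_image_cons (s : Finset (List ℕ)) (x : ℕ) (p : List ℕ → Prop)
    [DecidablePred p] :
    ((s.image (List.cons x)).filter p).card = (s.filter (fun t => p (x :: t))).card := by
  rw [Finset.filter_image]
  exact Finset.card_image_of_injective _ List.cons_injective

/-- equidistribution of the residues mod `2^k` of the `f`-values of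
odd words propagates from rank `n` to rank `n+1`. -/
theorem equidistribution_step (k n : ℕ) (hk : 1 ≤ k) (L L' : Finset (List ℕ))
    (hL : ∀ w : List ℕ, w ∈ L ↔ (∀ x ∈ w, x = 1 ∨ x = 2) ∧ w.sum = n ∧ Odd (fprod w))
    (hL' : ∀ w : List ℕ, w ∈ L' ↔ (∀ x ∈ w, x = 1 ∨ x = 2) ∧ w.sum = n + 1 ∧ Odd (fprod w))
    (h : ∃ c : ℕ, ∀ i : ℕ, Odd i → i < 2 ^ k →
      (L.filter (fun w => fprod w % 2 ^ k = i)).card = c) :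
    ∃ c : ℕ, ∀ i : ℕ, Odd i → i < 2 ^ k →
      (L'.filter (fun w => fprod w % 2 ^ k = i)).card = c := by
  classical
  obtain ⟨c, hc⟩ := h
  by_cases hpar : Odd n
  · -- n odd
    have hLcons : ∀ w ∈ L, w = 1 :: w.tail := by
      intro w hw
      obtain ⟨h1, h2, h3⟩ := (hL w).1 hw
      match w with
      | [] =>
        exfalso; simp at h2; rcases hpar with ⟨m, hm⟩; omega
      | x :: t =>
        rcases h1 x (by simp) with rfl | rfl
        · rfl
        · exfalso
          rw [fprod_two_cons] at h3
          have hodd : Odd (t.sum + 1) := (Nat.odd_mul.mp h3).1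
          simp at h2
          rcases hpar with ⟨m, hm⟩; rcases hodd with ⟨l, hl⟩; omega
    set M := L.image List.tail with hM
    have hLM : L = M.image (List.cons 1) := by
      ext w
      constructor
      · intro hw
        exact Finset.mem_image.mpr
          ⟨w.tail, Finset.mem_image.mpr ⟨w, hw, rfl⟩, (hLcons w hw).symm⟩
      · intro hw
        obtain ⟨t, ht, rfl⟩ := Finset.mem_image.mp hw
        obtain ⟨u, hu, rfl⟩ := Finset.mem_image.mp ht
        rwa [← hLcons u hu]
    have hMm : ∀ t ∈ M, (∀ x ∈ t, x = 1 ∨ x = 2) ∧ t.sum + 1 = n ∧ Odd (fprod t) := by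
      intro t ht
      obtain ⟨u, hu, rfl⟩ := Finset.mem_image.mp ht
      obtain ⟨h1, h2, h3⟩ := (hL u).1 hu
      have he := hLcons u hu
      refine ⟨fun y hy => h1 y (List.mem_of_mem_tail hy), ?_, ?_⟩
      · have hs := congrArg List.sum he
        simp at hs
        omega
      · have hf := congrArg fprod he
        rw [fprod_one_cons] at hf
        rwa [hf] at h3
    have hL'eq : L' = (L.image (List.cons 1)) ∪ (M.image (List.cons 2)) := by
      ext w
      constructor
      · intro hw
        obtain ⟨h1, h2, h3⟩ := (hL' w).1 hw
        match w with
        | [] => exfalso; simp at h2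
        | x :: t =>
          rcases h1 x (by simp) with rfl | rfl
          · refine Finset.mem_union_left _ (Finset.mem_image.mpr ⟨t, ?_, rfl⟩)
            refine (hL t).2 ⟨fun y hy => h1 y (by simp [hy]), ?_, ?_⟩
            · simp at h2; omega
            · rwa [fprod_one_cons] at h3
          · refine Finset.mem_union_right _ (Finset.mem_image.mpr ⟨t, ?_, rfl⟩)
            have hto : Odd (fprod t) := by
              rw [fprod_two_cons] at h3
              exact (Nat.odd_mul.mp h3).2
            have h1t : 1 :: t ∈ L := by
              refine (hL _).2 ⟨?_, ?_, ?_⟩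
              · intro y hy
                rcases List.mem_cons.mp hy with rfl | hy
                · left; rfl
                · exact h1 y (by simp [hy])
              · simp at h2 ⊢; omega
              · rwa [fprod_one_cons]
            exact Finset.mem_image.mpr ⟨1 :: t, h1t, rfl⟩
      · intro hw
        rcases Finset.mem_union.mp hw with hw | hw
        · obtain ⟨t, ht, rfl⟩ := Finset.mem_image.mp hw
          obtain ⟨h1, h2, h3⟩ := (hL t).1 ht
          refine (hL' _).2 ⟨?_, by simp [h2]; omega, by rwa [fprod_one_cons]⟩
          intro y hy
          rcases List.mem_cons.mp hy with rfl | hy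
          · left; rfl
          · exact h1 y hy
        · obtain ⟨t, ht, rfl⟩ := Finset.mem_image.mp hw
          obtain ⟨m1, m2, m3⟩ := hMm t ht
          refine (hL' _).2 ⟨?_, by simp; omega, ?_⟩
          · intro y hy
            rcases List.mem_cons.mp hy with rfl | hy
            · right; rfl
            · exact m1 y hy
          · rw [fprod_two_cons]
            exact Nat.odd_mul.mpr ⟨m2 ▸ hpar, m3⟩
    have hdisj : Disjoint (L.image (List.cons 1)) (M.image (List.cons 2)) := by
      rw [Finset.disjoint_left]
      intro w hw1 hw2
      obtain ⟨t, _, rfl⟩ := Finset.mem_image.mp hw1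
      obtain ⟨u, _, he⟩ := Finset.mem_image.mp hw2
      simp at he
    refine ⟨c + c, fun i hio hilt => ?_⟩
    obtain ⟨j, hjo, hjlt, hj⟩ := mul_mod_bij k n i hk hpar hio hilt
    rw [hL'eq, Finset.filter_union,
      Finset.card_union_of_disjoint (Finset.disjoint_filter_filter hdisj),
      card_filter_image_cons, card_filter_image_cons]
    have e1 : (L.filter (fun t => fprod (1 :: t) % 2 ^ k = i)).card = c := by
      have : L.filter (fun t => fprod (1 :: t) % 2 ^ k = i)
          = L.filter (fun w => fprod w % 2 ^ k = i) := by
        apply Finset.filter_congr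
        intro t _
        simp [fprod_one_cons]
      rw [this]; exact hc i hio hilt
    have e2 : (M.filter (fun t => fprod (2 :: t) % 2 ^ k = i)).card = c := by
      have hstep : M.filter (fun t => fprod (2 :: t) % 2 ^ k = i)
          = M.filter (fun t => fprod t % 2 ^ k = j) := by
        apply Finset.filter_congr
        intro t ht
        obtain ⟨-, m2, -⟩ := hMm t ht
        rw [fprod_two_cons, m2]
        simp [hj (fprod t)]
      rw [hstep]
      have : (M.filter (fun t => fprod t % 2 ^ k = j)).card
          = (L.filter (fun w => fprod w % 2 ^ k = j)).card := by
        rw [hLM, card_filter_image_cons]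
        congr 1
        apply Finset.filter_congr
        intro t _
        simp [fprod_one_cons]
      rw [this]; exact hc j hjo hjlt
    rw [e1, e2]
  · -- n even
    have hL'eq : L' = L.image (List.cons 1) := by
      ext w
      constructor
      · intro hw
        obtain ⟨h1, h2, h3⟩ := (hL' w).1 hw
        match w with
        | [] => exfalso; simp at h2
        | x :: t =>
          rcases h1 x (by simp) with rfl | rfl
          · refine Finset.mem_image.mpr ⟨t, ?_, rfl⟩
            refine (hL t).2 ⟨fun y hy => h1 y (by simp [hy]), ?_, ?_⟩
            · simp at h2; omega
            · rwa [fprod_one_cons] at h3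
          · exfalso
            rw [fprod_two_cons] at h3
            have hsum : t.sum + 1 = n := by simp at h2; omega
            rw [hsum] at h3
            exact hpar (Nat.odd_mul.mp h3).1
      · intro hw
        obtain ⟨t, ht, rfl⟩ := Finset.mem_image.mp hw
        obtain ⟨h1, h2, h3⟩ := (hL t).1 ht
        refine (hL' _).2 ⟨?_, by simp [h2]; omega, by rwa [fprod_one_cons]⟩
        intro y hy
        rcases List.mem_cons.mp hy with rfl | hy
        · left; rfl
        · exact h1 y hy
    refine ⟨c, fun i hio hilt => ?_⟩
    rw [hL'eq, card_filter_image_cons]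
    have : L.filter (fun t => fprod (1 :: t) % 2 ^ k = i)
        = L.filter (fun w => fprod w % 2 ^ k = i) := by
      apply Finset.filter_congr
      intro t _
      simp [fprod_one_cons]
    rw [this]; exact hc i hio hilt
end

section
/- For every k ≥ 1, each odd residue class modulo 2^k contains the same number of subsets S of the odd numbers {1, 3, 5, …, 2^{k−1}+1} whose product ∏_{x∈S} x lies in that class; that is, the map S ↦ ∏_{x∈S} x mod 2^k from subsets of {1,3,…,2^{k−1}+1} to (ℤ/2^kℤ)* is exactly 2-to-1 onto the odd residues. -/
open Finset

/-- The odd integers between `1` and `n`. -/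
def oddsUpTo (n : ℕ) : Finset ℕ := (Finset.range (n + 1)).filter (fun x => Odd x)

section Abstract

variable {G : Type*} [CommGroup G] [DecidableEq G]

/-- Number of subsets of `A` whose `u`-product is `g`. -/
def pcount (u : ℕ → G) (A : Finset ℕ) (g : G) : ℕ :=
  (A.powerset.filter (fun S => ∏ x ∈ S, u x = g)).card

lemma pcount_insert (u : ℕ → G) {A : Finset ℕ} {x : ℕ} (hx : x ∉ A) (g : G) :
    pcount u (insert x A) g = pcount u A g + pcount u A (g * (u x)⁻¹) := by
  classical
  unfold pcount
  rw [Finset.powerset_insert, Finset.filter_union, Finset.card_union_of_disjoint, Finset.filter_image]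
  · congr 1
    rw [Finset.card_image_of_injOn]
    · congr 1
      apply Finset.filter_congr
      intro S hS
      rw [Finset.mem_powerset] at hS
      have hxS : x ∉ S := fun hx' => hx (hS hx')
      rw [Finset.prod_insert hxS, mul_comm, ← eq_mul_inv_iff_mul_eq]
    · intro S hS T hT hST
      rw [Finset.mem_coe, Finset.mem_filter, Finset.mem_powerset] at hS hT
      have hxS : x ∉ S := fun hx' => hx (hS.1 hx')
      have hxT : x ∉ T := fun hx' => hx (hT.1 hx')
      have := congrArg (fun (W : Finset ℕ) => W.erase x) hST
      simpa [Finset.erase_insert hxS, Finset.erase_insert hxT] using this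
  · rw [Finset.disjoint_left]
    intro S hS hS'
    rw [Finset.mem_filter, Finset.mem_powerset] at hS
    rw [Finset.filter_image, Finset.mem_image] at hS'
    obtain ⟨T, _, rfl⟩ := hS'
    exact hx (hS.1 (Finset.mem_insert_self x T))

/-- `pcount u A` is invariant under right multiplication by `h`. -/
def IsInv (u : ℕ → G) (A : Finset ℕ) (h : G) : Prop :=
  ∀ g, pcount u A (g * h) = pcount u A g

lemma isInv_one (u : ℕ → G) (A : Finset ℕ) : IsInv u A 1 := fun g => by rw [mul_one]

lemma isInv_insert {u : ℕ → G} {A : Finset ℕ} {x : ℕ} {h : G} (hx : x ∉ A)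
    (hh : IsInv u A h) : IsInv u (insert x A) h := by
  intro g
  rw [pcount_insert u hx, pcount_insert u hx, hh, mul_right_comm, hh]

lemma isInv_new {u : ℕ → G} {A : Finset ℕ} {x : ℕ} (hx : x ∉ A)
    (h2 : IsInv u A (u x * u x)) : IsInv u (insert x A) (u x) := by
  intro g
  rw [pcount_insert u hx, pcount_insert u hx]
  have e1 : g * u x * (u x)⁻¹ = g := by group
  have e2 : g * u x = g * (u x)⁻¹ * (u x * u x) := by group
  rw [e1, e2, h2, add_comm]

lemma isInv_union (u : ℕ → G) (h : G) (C : Finset ℕ) :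
    ∀ A : Finset ℕ, Disjoint A C → IsInv u A h → IsInv u (A ∪ C) h := by
  classical
  induction C using Finset.induction_on with
  | empty => intro A _ hA; simpa using hA
  | @insert x C hxC ih =>
    intro A hd hA
    have hd' : Disjoint A C := hd.mono_right (Finset.subset_insert _ _)
    have hxA : x ∉ A ∪ C := by
      rw [Finset.mem_union]
      rintro (h' | h')
      · exact Finset.disjoint_left.mp hd h' (Finset.mem_insert_self x C)
      · exact hxC h'
    rw [Finset.union_insert]
    exact isInv_insert hxA (ih A hd' hA)

lemma isInv_of_subset {u : ℕ → G} {h : G} {B A : Finset ℕ} (hBA : B ⊆ A)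
    (hh : IsInv u B h) : IsInv u A h := by
  classical
  have := isInv_union u h (A \ B) B Finset.disjoint_sdiff hh
  rwa [Finset.union_sdiff_of_subset hBA] at this

/-- The subgroup of invariances of `pcount u A`. -/
def invSub (u : ℕ → G) (A : Finset ℕ) : Subgroup G where
  carrier := {h | IsInv u A h}
  one_mem' := isInv_one u A
  mul_mem' := by
    intro a b ha hb g
    rw [← mul_assoc, hb, ha]
  inv_mem' := by
    intro a ha g
    have := ha (g * a⁻¹)
    rw [inv_mul_cancel_right] at this
    exact this.symm

lemma card_lt_of_lt_subgroup {H K : Subgroup G} [Finite G] (h : H < K) :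
    Nat.card H < Nat.card K := by
  have : Nat.card (H : Set G) < Nat.card (K : Set G) := by
    rw [Nat.card_coe_set_eq, Nat.card_coe_set_eq]
    exact Set.ncard_lt_ncard (by exact_mod_cast h) (Set.toFinite _)
  exact this

lemma main_aux [Finite G] (u : ℕ → G) (A : Finset ℕ) (w : G)
    (hex : ∀ H : Subgroup G, w ∈ H → H ≠ ⊤ → ∃ y ∈ A, u y ∉ H ∧ u y * u y ∈ H) :
    ∀ (n : ℕ) (H : Subgroup G) (B : Finset ℕ), Nat.card G - Nat.card H ≤ n →
      w ∈ H → B ⊆ A → (∀ h ∈ H, IsInv u B h) → (∀ x ∈ B, u x ∈ H) →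
      ∀ h : G, IsInv u A h := by
  classical
  intro n
  induction n with
  | zero =>
    intro H B hcard _ hBA hinv _ h
    have hH : H = ⊤ := by
      apply Subgroup.eq_top_of_card_eq
      have h1 : Nat.card H ≤ Nat.card G := Subgroup.card_le_card_group H
      omega
    exact isInv_of_subset hBA (hinv h (hH ▸ Subgroup.mem_top h))
  | succ n ih =>
    intro H B hcard hw hBA hinv hmem h
    by_cases hH : H = ⊤
    · exact isInv_of_subset hBA (hinv h (hH ▸ Subgroup.mem_top h))
    · obtain ⟨y, hyA, hy1, hy2⟩ := hex H hw hH
      have hyB : y ∉ B := fun hyB => hy1 (hmem y hyB)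
      set H' := H ⊔ Subgroup.closure {u y} with hH'
      have hle : H ≤ H' := le_sup_left
      have hyH' : u y ∈ H' :=
        le_sup_right (α := Subgroup G) (Subgroup.subset_closure rfl)
      have hB'A : insert y B ⊆ A := Finset.insert_subset hyA hBA
      have hinv' : ∀ h' ∈ H', IsInv u (insert y B) h' := by
        have hle2 : H' ≤ invSub u (insert y B) := by
          apply sup_le
          · intro h' hh'
            exact isInv_insert hyB (hinv h' hh')
          · rw [Subgroup.closure_le]
            intro z hz
            rw [Set.mem_singleton_iff] at hz
            subst hz
            exact isInv_new hyB (hinv _ hy2)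
        exact fun h' hh' => hle2 hh'
      have hmem' : ∀ x ∈ insert y B, u x ∈ H' := by
        intro x hx
        rcases Finset.mem_insert.mp hx with rfl | hx
        · exact hyH'
        · exact hle (hmem x hx)
      have hcard' : Nat.card G - Nat.card H' ≤ n := by
        have hlt : Nat.card H < Nat.card H' :=
          card_lt_of_lt_subgroup (lt_of_le_of_ne hle (fun he => hy1 (he ▸ hyH')))
        have hle3 : Nat.card H' ≤ Nat.card G := Subgroup.card_le_card_group H'
        omega
      exact ih H' (insert y B) hcard' (hle hw) hB'A hinv' hmem' h

end Abstract

def uk (m : ℕ) : ℕ → (ZMod m)ˣ := fun x =>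
  if h : Nat.Coprime x m then ZMod.unitOfCoprime x h else 1

lemma uk_val {m x : ℕ} (h : Nat.Coprime x m) :
    ((uk m x : (ZMod m)ˣ) : ZMod m) = (x : ZMod m) := by
  rw [uk, dif_pos h]; exact ZMod.coe_unitOfCoprime x h

lemma odd_coprime_two_pow {x k : ℕ} (hx : Odd x) : Nat.Coprime x (2^k) :=
  Nat.Coprime.pow_right _ (Nat.coprime_two_right.mpr hx)

lemma uk_val_odd {k x : ℕ} (hx : Odd x) :
    ((uk (2^k) x : (ZMod (2^k))ˣ) : ZMod (2^k)) = (x : ZMod (2^k)) :=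
  uk_val (odd_coprime_two_pow hx)

lemma x0_sq (j : ℕ) :
    uk (2^(j+2)) (2^(j+1)+1) * uk (2^(j+2)) (2^(j+1)+1) = 1 := by
  haveI : NeZero (2^(j+2)) := ⟨by positivity⟩
  have hodd : Odd (2^(j+1)+1) := by
    refine Even.add_one ?_
    exact (Nat.even_pow).mpr ⟨even_two, by omega⟩
  apply Units.ext
  push_cast
  rw [uk_val_odd hodd]
  have hnat : (2^(j+1)+1) * (2^(j+1)+1) = 2^(j+2) * (2^j + 1) + 1 := by ring
  rw [← Nat.cast_mul, hnat]
  rw [Nat.cast_add, Nat.cast_mul, ZMod.natCast_self]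
  simp

lemma exists_step (j : ℕ) (H : Subgroup (ZMod (2^(j+2)))ˣ)
    (hx0 : uk (2^(j+2)) (2^(j+1)+1) ∈ H) (hH : H ≠ ⊤) :
    ∃ y ∈ oddsUpTo (2^(j+1)+1), uk (2^(j+2)) y ∉ H ∧ uk (2^(j+2)) y * uk (2^(j+2)) y ∈ H := by
  haveI : NeZero (2^(j+2)) := ⟨by positivity⟩
  set G := (ZMod (2^(j+2)))ˣ with hG
  haveI : Nontrivial (G ⧸ H) := by
    obtain ⟨g, hg⟩ : ∃ g, g ∉ H := by
      by_contra hc; push_neg at hc; exact hH (Subgroup.eq_top_iff' H |>.mpr hc)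
    exact ⟨⟨(g : G ⧸ H), 1, by simpa [QuotientGroup.eq_one_iff] using hg⟩⟩
  haveI : Fintype (G ⧸ H) := Fintype.ofFinite _
  have hdvd : Nat.card (G ⧸ H) ∣ 2^(j+1) := by
    have h1 := Subgroup.card_quotient_dvd_card H
    have h2 : Nat.card G = 2^(j+1) := by
      rw [Nat.card_eq_fintype_card, ZMod.card_units_eq_totient,
        Nat.totient_prime_pow Nat.prime_two (by omega)]
      simp
    rwa [h2] at h1
  have h2dvd : 2 ∣ Fintype.card (G ⧸ H) := by
    rw [← Nat.card_eq_fintype_card]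
    obtain ⟨m, hm, hmeq⟩ := (Nat.dvd_prime_pow Nat.prime_two).mp hdvd
    have hone : 1 < Nat.card (G ⧸ H) := Finite.one_lt_card
    rcases m with _ | m
    · rw [pow_zero] at hmeq; omega
    · rw [hmeq]; exact dvd_pow_self 2 (Nat.succ_ne_zero m)
  obtain ⟨gb, hgb⟩ := exists_prime_orderOf_dvd_card 2 h2dvd
  obtain ⟨g, rfl⟩ := QuotientGroup.mk'_surjective H gb
  have hgH : g ∉ H := by
    intro hmem
    have h1 : (QuotientGroup.mk' H) g = 1 := by
      simpa [QuotientGroup.eq_one_iff] using hmem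
    rw [h1, orderOf_one] at hgb; omega
  have hg2 : g * g ∈ H := by
    have h0 := pow_orderOf_eq_one ((QuotientGroup.mk' H) g)
    rw [hgb] at h0
    have h1 : (QuotientGroup.mk' H) (g * g) = 1 := by
      rw [map_mul, ← sq]; exact h0
    rwa [QuotientGroup.mk'_apply, QuotientGroup.eq_one_iff] at h1
  set t := ((g : ZMod (2^(j+2))).val) with ht
  have htco : Nat.Coprime t (2^(j+2)) := ZMod.val_coe_unit_coprime g
  have htodd : Odd t := by
    rw [← Nat.coprime_two_right]
    exact Nat.Coprime.coprime_dvd_right (dvd_pow_self 2 (by omega)) htco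
  have htlt : t < 2^(j+2) := ZMod.val_lt _
  have htcast : ((t : ℕ) : ZMod (2^(j+2))) = (g : ZMod (2^(j+2))) :=
    ZMod.natCast_rightInverse _
  have hoddx0 : Odd (2^(j+1)+1) := Even.add_one ((Nat.even_pow).mpr ⟨even_two, by omega⟩)
  by_cases hcase : t ≤ 2^(j+1)+1
  · have hu : uk (2^(j+2)) t = g := Units.ext (by rw [uk_val_odd htodd, htcast])
    refine ⟨t, ?_, ?_, ?_⟩
    · rw [oddsUpTo, Finset.mem_filter, Finset.mem_range]; exact ⟨by omega, htodd⟩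
    · rw [hu]; exact hgH
    · rw [hu]; exact hg2
  · push_neg at hcase
    set y := t - 2^(j+1) with hy
    have hyodd : Odd y :=
      Nat.Odd.sub_even (by omega) htodd ((Nat.even_pow).mpr ⟨even_two, by omega⟩)
    have hpow : 2^(j+2) = 2*2^(j+1) := by ring
    have hymem : y ∈ oddsUpTo (2^(j+1)+1) := by
      rw [oddsUpTo, Finset.mem_filter, Finset.mem_range]
      exact ⟨by omega, hyodd⟩
    have hukey : uk (2^(j+2)) y = g * uk (2^(j+2)) (2^(j+1)+1) := by
      apply Units.ext
      rw [Units.val_mul, uk_val_odd hyodd, uk_val_odd hoddx0]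
      obtain ⟨s, hs⟩ := htodd
      have hnat : t * (2^(j+1)+1) + 2^(j+1) = t + 2^(j+2) * (s+1) := by rw [hs]; ring
      have hy2 : y + 2^(j+1) = t := by omega
      have c1 : ((t : ℕ) : ZMod (2^(j+2))) * ((2^(j+1)+1 : ℕ) : ZMod (2^(j+2)))
          + ((2^(j+1) : ℕ) : ZMod (2^(j+2))) = ((t : ℕ) : ZMod (2^(j+2))) := by
        rw [← Nat.cast_mul, ← Nat.cast_add, hnat, Nat.cast_add, Nat.cast_mul,
          ZMod.natCast_self]
        simp
      have c2 : ((y : ℕ) : ZMod (2^(j+2))) + ((2^(j+1) : ℕ) : ZMod (2^(j+2)))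
          = ((t : ℕ) : ZMod (2^(j+2))) := by
        rw [← Nat.cast_add, hy2]
      have h3 : ((t : ℕ) : ZMod (2^(j+2))) * ((2^(j+1)+1 : ℕ) : ZMod (2^(j+2)))
          = ((y : ℕ) : ZMod (2^(j+2))) := add_right_cancel (c1.trans c2.symm)
      rw [← htcast, ← h3]
    refine ⟨y, hymem, ?_, ?_⟩
    · intro hmem
      exact hgH (by
        have : g = uk (2^(j+2)) y * (uk (2^(j+2)) (2^(j+1)+1))⁻¹ := by
          rw [hukey, mul_inv_cancel_right]
        rw [this]
        exact H.mul_mem hmem (H.inv_mem hx0))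
    · rw [hukey]
      rw [mul_mul_mul_comm, x0_sq j, mul_one]
      exact hg2

/-- each odd residue class mod `2^k` contains the same number of
subsets `S` of the odd numbers `{1, 3, …, 2^(k-1)+1}` with `∏_{x ∈ S} x` in that
class. -/
theorem products_equidistribute_base (k : ℕ) (hk : 1 ≤ k) :
    ∃ c : ℕ, ∀ i : ℕ, Odd i → i < 2 ^ k →
      ((oddsUpTo (2 ^ (k - 1) + 1)).powerset.filter
        (fun S => (∏ x ∈ S, x) % 2 ^ k = i)).card = c := by
  rcases Nat.lt_or_ge k 2 with hk2 | hk2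
  · -- k = 1
    interval_cases k
    refine ⟨(oddsUpTo (2 ^ 0 + 1)).powerset.card, ?_⟩
    intro i hi hilt
    have hi1 : i = 1 := by obtain ⟨m, hm⟩ := hi; omega
    subst hi1
    rw [Finset.filter_true_of_mem]
    intro S hS
    rw [Finset.mem_powerset] at hS
    have hodd : Odd (∏ x ∈ S, x) := by
      apply Finset.prod_induction _ Odd (fun a b ha hb => ha.mul hb) odd_one
      intro x hx
      have := hS hx
      rw [oddsUpTo, Finset.mem_filter] at this
      exact this.2
    have := Nat.odd_iff.mp hodd
    norm_num
    omega
  · obtain ⟨j, rfl⟩ : ∃ j, k = j + 2 := ⟨k - 2, by omega⟩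
    simp only [show j + 2 - 1 = j + 1 from rfl]
    haveI : NeZero (2 ^ (j + 2)) := ⟨by positivity⟩
    set u := uk (2 ^ (j + 2)) with hu
    set A := oddsUpTo (2 ^ (j + 1) + 1) with hA
    set p := 2 ^ (j + 1) + 1 with hp
    have hoddp : Odd p := Even.add_one ((Nat.even_pow).mpr ⟨even_two, by omega⟩)
    have hpA : p ∈ A := by
      rw [hA, oddsUpTo, Finset.mem_filter, Finset.mem_range]; exact ⟨by omega, hoddp⟩
    have hbase : IsInv u {p} (u p) := by
      have h0 : IsInv u ∅ (u p * u p) := by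
        rw [hu, hp, x0_sq j]; exact isInv_one _ _
      have := isInv_new (Finset.notMem_empty p) h0
      simpa using this
    have hall : ∀ h, IsInv u A h := by
      refine main_aux u A (u p)
        (fun H hw hH => exists_step j H hw hH)
        (Nat.card (ZMod (2 ^ (j + 2)))ˣ) (Subgroup.closure {u p}) {p}
        (Nat.sub_le _ _) (Subgroup.subset_closure rfl) ?_ ?_ ?_
      · simpa using hpA
      · intro h hh
        have hle : Subgroup.closure {u p} ≤ invSub u {p} := by
          rw [Subgroup.closure_le]
          intro z hz
          rw [Set.mem_singleton_iff] at hz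
          subst hz
          exact hbase
        exact hle hh
      · intro x hx
        rw [Finset.mem_singleton] at hx
        subst hx
        exact Subgroup.subset_closure rfl
    refine ⟨pcount u A 1, ?_⟩
    intro i hi hilt
    have hico : Nat.Coprime i (2 ^ (j + 2)) := odd_coprime_two_pow hi
    have hfilter : (A.powerset.filter
        (fun S => (∏ x ∈ S, x) % 2 ^ (j + 2) = i)).card = pcount u A (u i) := by
      unfold pcount
      congr 1
      apply Finset.filter_congr
      intro S hS
      rw [Finset.mem_powerset] at hS
      have hSodd : ∀ x ∈ S, Odd x := by
        intro x hx
        have := hS hx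
        rw [hA, oddsUpTo, Finset.mem_filter] at this
        exact this.2
      have hprodcast : ((∏ x ∈ S, u x : (ZMod (2 ^ (j + 2)))ˣ) : ZMod (2 ^ (j + 2)))
          = ((∏ x ∈ S, x : ℕ) : ZMod (2 ^ (j + 2))) := by
        rw [Nat.cast_prod]
        have hmp := map_prod (Units.coeHom (ZMod (2 ^ (j + 2)))) u S
        simp only [Units.coeHom_apply] at hmp
        rw [hmp]
        apply Finset.prod_congr rfl
        intro x hx
        exact uk_val_odd (hSodd x hx)
      have h1 : (∏ x ∈ S, u x = u i)
          ↔ ((∏ x ∈ S, x : ℕ) : ZMod (2 ^ (j + 2))) = ((i : ℕ) : ZMod (2 ^ (j + 2))) := by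
        rw [Units.ext_iff, hprodcast, hu, uk_val hico]
      have h2 : ((∏ x ∈ S, x : ℕ) : ZMod (2 ^ (j + 2))) = ((i : ℕ) : ZMod (2 ^ (j + 2)))
          ↔ (∏ x ∈ S, x) % 2 ^ (j + 2) = i % 2 ^ (j + 2) := ZMod.natCast_eq_natCast_iff' _ _ _
      rw [h1, h2, Nat.mod_eq_of_lt hilt]
    rw [hfilter]
    have := hall (u i) 1
    rwa [one_mul] at this
end

section
/- Let p be a prime. A word w over {1,2} has f_w coprime to p if and only if w can be written as a₀a₁⋯a_k where the block a₀ has rank (letter-sum) less than p and each block a_i for i ≥ 1 has rank exactly p. -/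
lemma drop_sum_le (w : List ℕ) (i : ℕ) : (w.drop i).sum ≤ w.sum := by
  conv_rhs => rw [← List.take_append_drop i w]
  rw [List.sum_append]; omega

lemma two_le_drop_sum (w : List ℕ) (i : ℕ) (hi : i < w.length) (h2 : w[i] = 2) :
    2 ≤ (w.drop i).sum := by
  rw [List.drop_eq_getElem_cons hi, List.sum_cons, h2]; omega

/-- `Good p w`: no 2-letter position has suffix sum ≡ 1 mod p. -/
def Good (p : ℕ) (w : List ℕ) : Prop :=
  ∀ i (hi : i < w.length), w[i] = 2 → ¬ p ∣ ((w.drop i).sum - 1)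

lemma cut (w : List ℕ) (hw : ∀ x ∈ w, x = 1 ∨ x = 2) :
    ∀ m, m ≤ w.sum →
    (∃ i, i ≤ w.length ∧ (w.drop i).sum = m) ∨
    (∃ i, ∃ h : i < w.length, w[i] = 2 ∧ (w.drop i).sum = m + 1) := by
  induction w with
  | nil =>
      intro m hm
      simp at hm
      exact Or.inl ⟨0, by simp, by simp [hm]⟩
  | cons x t ih =>
      intro m hm
      rcases eq_or_lt_of_le hm with he | hlt
      · exact Or.inl ⟨0, by simp, by simp [he]⟩
      · have hx := hw x (by simp)
        have hm' : m ≤ t.sum ∨ (x = 2 ∧ m = t.sum + 1) := by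
          simp [List.sum_cons] at hlt; omega
        rcases hm' with hm' | ⟨hx2, hm'⟩
        · rcases ih (fun y hy => hw y (by simp [hy])) m hm' with ⟨i, hi, hs⟩ | ⟨i, hi, h2, hs⟩
          · exact Or.inl ⟨i + 1, by simpa using hi, by simpa using hs⟩
          · exact Or.inr ⟨i + 1, by simpa using hi, by simpa using h2, by simpa using hs⟩
        · exact Or.inr ⟨0, by simp, by simpa using hx2, by simp [hx2, hm']; omega⟩

lemma good_of_small (p : ℕ) (w : List ℕ) (h : w.sum < p) : Good p w := by
  intro i hi h2 hd
  have h1 := two_le_drop_sum w i hi h2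
  have h3 := drop_sum_le w i
  have := Nat.le_of_dvd (by omega) hd
  omega

lemma good_append (p : ℕ) (hp : 0 < p) (u b : List ℕ) (hu : Good p u) (hbs : b.sum = p) :
    Good p (u ++ b) := by
  intro i hi h2 hd
  simp only [List.length_append] at hi
  by_cases hc : i < u.length
  · have hdj : (u ++ b).drop i = u.drop i ++ b := List.drop_append_of_le_length (by omega)
    have hg : u[i] = 2 := by rwa [List.getElem_append_left hc] at h2
    have h1 := two_le_drop_sum u i hc hg
    rw [hdj, List.sum_append, hbs] at hd
    have hd' : p ∣ ((u.drop i).sum - 1) + p := by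
      have : (u.drop i).sum + p - 1 = ((u.drop i).sum - 1) + p := by omega
      rwa [this] at hd
    exact hu i hc hg ((Nat.dvd_add_self_right).mp hd')
  · have hj : i - u.length < b.length := by omega
    have hdj : (u ++ b).drop i = b.drop (i - u.length) := by
      conv_lhs => rw [show i = u.length + (i - u.length) by omega]
      simp
    have hg : b[i - u.length] = 2 := by
      rwa [List.getElem_append_right (by omega)] at h2
    rw [hdj] at hd
    have h1 := two_le_drop_sum b _ hj hg
    have h3 := drop_sum_le b (i - u.length)
    have := Nat.le_of_dvd (by omega) hd
    omega

lemma decomp_good (p : ℕ) (hp : 0 < p) (blocks : List (List ℕ)) :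
    ∀ a₀ : List ℕ, a₀.sum < p → (∀ b ∈ blocks, b.sum = p) →
    Good p (a₀ ++ blocks.flatten) := by
  induction blocks using List.reverseRecOn with
  | nil => intro a₀ h1 _; simpa using good_of_small p a₀ h1
  | append_singleton bs b ih =>
      intro a₀ h1 h2
      have he : a₀ ++ (bs ++ [b]).flatten = (a₀ ++ bs.flatten) ++ b := by simp
      rw [he]
      exact good_append p hp _ b (ih a₀ h1 fun c hc => h2 c (by simp [hc]))
        (h2 b (by simp))

lemma good_decomp (p : ℕ) (hp : 0 < p) :
    ∀ n (w : List ℕ), w.length ≤ n → (∀ x ∈ w, x = 1 ∨ x = 2) → Good p w →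
    ∃ (a₀ : List ℕ) (blocks : List (List ℕ)),
      w = a₀ ++ blocks.flatten ∧ a₀.sum < p ∧ ∀ b ∈ blocks, b.sum = p := by
  intro n
  induction n with
  | zero =>
      intro w hl _ _
      have : w = [] := List.length_eq_zero_iff.mp (by omega)
      exact ⟨[], [], by simp [this], by simpa using hp, by simp⟩
  | succ n ih =>
      intro w hl hw hg
      by_cases hs : w.sum < p
      · exact ⟨w, [], by simp, hs, by simp⟩
      · push_neg at hs
        rcases cut w hw p hs with ⟨i, hi, hsum⟩ | ⟨i, hi, h2, hsum⟩
        · have hiw : i < w.length := by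
            by_contra hc
            push_neg at hc
            rw [List.drop_eq_nil_of_le hc] at hsum
            simp at hsum; omega
          set u := w.take i with hu
          set v := w.drop i with hv
          have e : w = u ++ v := (List.take_append_drop i w).symm
          have hul : u.length = i := by simp [hu]; omega
          have hletters : ∀ x ∈ u, x = 1 ∨ x = 2 := fun x hx => hw x (List.take_subset i w hx)
          have hgu : Good p u := by
            intro j hj hj2 hd
            have hjw : j < w.length := by omega
            have hdj : w.drop j = u.drop j ++ v := by
              conv_lhs => rw [e]
              exact List.drop_append_of_le_length (by omega)
            have hgj : w[j] = 2 := by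
              simp only [hu, List.getElem_take] at hj2
              exact hj2
            have h1 := two_le_drop_sum u j hj hj2
            apply hg j hjw hgj
            rw [hdj, List.sum_append, hsum]
            have : (u.drop j).sum + p - 1 = ((u.drop j).sum - 1) + p := by omega
            rw [this]
            exact (Nat.dvd_add_self_right).mpr hd
          obtain ⟨a₀, bs, heq, h1, h2⟩ := ih u (by omega) hletters hgu
          refine ⟨a₀, bs ++ [v], ?_, h1, ?_⟩
          · rw [e, heq]; simp
          · intro b hb
            rcases List.mem_append.mp hb with hb | hb
            · exact h2 b hb
            · simp at hb; rw [hb]; exact hsum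
        · exact absurd ⟨1, by omega⟩ (hg i hi h2)

lemma coprime_iff_good (p : ℕ) (hp : p.Prime) (w : List ℕ) :
    Nat.Coprime (fprod w) p ↔ Good p w := by
  rw [Nat.coprime_comm, Nat.Prime.coprime_iff_not_dvd hp, fprod,
    Prime.dvd_finset_prod_iff hp.prime]
  constructor
  · intro h i hi h2 hd
    exact h ⟨⟨i, hi⟩, by simp [Finset.mem_filter, List.get_eq_getElem, h2], hd⟩
  · rintro h ⟨i, hmem, hd⟩
    simp only [Finset.mem_filter, Finset.mem_univ, true_and, List.get_eq_getElem] at hmem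
    exact h i.1 i.2 hmem hd

/-- `f w` is coprime to the prime `p` iff `w = a₀ a₁ ⋯ a_k` where the
block `a₀` has rank `< p` and all the other blocks have rank exactly `p`. -/
theorem coprime_characterization (p : ℕ) (hp : p.Prime) (w : List ℕ)
    (hw : ∀ x ∈ w, x = 1 ∨ x = 2) :
    Nat.Coprime (fprod w) p ↔
      ∃ (a₀ : List ℕ) (blocks : List (List ℕ)),
        w = a₀ ++ blocks.flatten ∧ a₀.sum < p ∧ ∀ b ∈ blocks, b.sum = p := by
  rw [coprime_iff_good p hp w]
  constructor
  · exact good_decomp p hp.pos w.length w le_rfl hw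
  · rintro ⟨a₀, blocks, rfl, h1, h2⟩
    exact decomp_good p hp.pos blocks a₀ h1 h2
end
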